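/- For every integer n ≥ 2 and every real c with 0 < c ≤ 1/2 satisfying log n ≥ σ·log(1/c), either f(n) ≥ 1/(4c) or f(n) ≥ k·f(c^{2σ}·n), where k = ⌊(σ·log(1/c) − 1)/log(2/ε)⌋. -/

import Mathlib

open SimpleGraph
open scoped Classical

/-- A cograph is a graph with no induced path on 4 vertices. -/
def IsCograph {V : Type} (G : SimpleGraph V) : Prop :=
  ¬ Nonempty (pathGraph 4 ↪g G)

/-- `phi G` is the maximum number of vertices of an induced subgraph of `G`
that is a cograph. -/
noncomputable def phi {n : ℕ} (G : SimpleGraph (Fin n)) : ℕ :=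
  sSup {k | ∃ s : Finset (Fin n), s.card = k ∧ IsCograph (G.induce (s : Set (Fin n)))}

/-- A class of graphs (one predicate for each number of vertices) is hereditary if it is
closed under isomorphic copies of induced subgraphs. -/
def Hereditary (I : ∀ n : ℕ, SimpleGraph (Fin n) → Prop) : Prop :=
  ∀ (m n : ℕ) (G : SimpleGraph (Fin n)) (H : SimpleGraph (Fin m)),
    I n G → Nonempty (H ↪g G) → I m H

/-- `fI I x` is the minimum of `phi G` over graphs `G` in the class `I` with `⌈x⌉`
vertices. -/
noncomputable def fI (I : ∀ n : ℕ, SimpleGraph (Fin n) → Prop) (x : ℝ) : ℕ :=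
  sInf {m | ∃ G : SimpleGraph (Fin ⌈x⌉₊), I ⌈x⌉₊ G ∧ phi G = m}

section Aux

open Finset

lemma cograph_map {β γ : Type} {H : SimpleGraph β} {G : SimpleGraph γ} (ψ : H ↪g G)
    (s : Finset β) (h : IsCograph (H.induce ↑s)) :
    IsCograph (G.induce ↑(s.map ψ.toEmbedding)) := by
  rintro ⟨e⟩
  apply h
  have hmem : ∀ i : Fin 4, ∃ v : β, v ∈ s ∧ ψ v = ((e i : ↑(↑(s.map ψ.toEmbedding) : Set γ)) : γ) := by
    intro i
    have := (e i).2
    simp only [Finset.coe_map, Set.mem_image, Finset.mem_coe] at this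
    obtain ⟨w, hw, hweq⟩ := this
    exact ⟨w, hw, hweq⟩
  choose v hv hveq using hmem
  refine ⟨⟨⟨fun i => ⟨v i, hv i⟩, ?_⟩, ?_⟩⟩
  · intro i j hij
    apply e.injective
    have h1 : v i = v j := by simpa using hij
    have : ψ (v i) = ψ (v j) := congrArg ψ h1
    rw [hveq i, hveq j] at this
    exact Subtype.ext this
  · intro i j
    simp only [Function.Embedding.coeFn_mk, comap_adj, Function.Embedding.coe_subtype]
    rw [← ψ.map_adj_iff]
    show G.Adj (ψ (v i)) (ψ (v j)) ↔ _
    rw [hveq i, hveq j]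
    exact e.map_adj_iff

lemma cograph_empty {V : Type} (G : SimpleGraph V) :
    IsCograph (G.induce ↑(∅ : Finset V)) := by
  rintro ⟨e⟩
  have := (e 0).2
  simp at this

lemma cograph_subset {V : Type} {G : SimpleGraph V} {s t : Finset V} (hts : t ⊆ s)
    (h : IsCograph (G.induce ↑s)) : IsCograph (G.induce ↑t) := by
  rintro ⟨e⟩
  refine h ⟨⟨⟨fun i => ⟨(e i : V), hts (e i).2⟩, ?_⟩, ?_⟩⟩
  · intro i j hij
    have hv : (e i : V) = (e j : V) := by simpa using hij
    exact e.injective (Subtype.ext hv)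
  · intro i j
    exact e.map_adj_iff

lemma phi_bddAbove {n : ℕ} (G : SimpleGraph (Fin n)) :
    BddAbove {k | ∃ s : Finset (Fin n), s.card = k ∧ IsCograph (G.induce (s : Set (Fin n)))} := by
  refine ⟨n, ?_⟩
  rintro k ⟨s, rfl, -⟩
  simpa using s.card_le_univ

lemma phi_spec {n : ℕ} (G : SimpleGraph (Fin n)) :
    ∃ s : Finset (Fin n), s.card = phi G ∧ IsCograph (G.induce (s : Set (Fin n))) := by
  have hne : {k | ∃ s : Finset (Fin n), s.card = k ∧
      IsCograph (G.induce (s : Set (Fin n)))}.Nonempty := ⟨0, ∅, rfl, cograph_empty G⟩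
  exact Nat.sSup_mem hne (phi_bddAbove G)

lemma le_phi {n : ℕ} {G : SimpleGraph (Fin n)} {s : Finset (Fin n)}
    (h : IsCograph (G.induce (s : Set (Fin n)))) : s.card ≤ phi G :=
  le_csSup (phi_bddAbove G) ⟨s, rfl, h⟩

lemma cograph_union {V : Type} [DecidableEq V] {G : SimpleGraph V} {s t : Finset V}
    (hs : IsCograph (G.induce ↑s)) (ht : IsCograph (G.induce ↑t))
    (hst : (∀ a ∈ s, ∀ b ∈ t, ¬ G.Adj a b) ∨ (∀ a ∈ s, ∀ b ∈ t, G.Adj a b)) :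
    IsCograph (G.induce ↑(s ∪ t)) := by
  rintro ⟨e⟩
  set w : Fin 4 → V := fun i => (e i : V) with hw
  have hmem : ∀ i, w i ∈ s ∨ w i ∈ t := by
    intro i; have := (e i).2; simpa [Finset.mem_union] using this
  have hrestr : ∀ u : Finset V, (∀ i, w i ∈ u) → IsCograph (G.induce ↑u) → False := by
    intro u hall hu
    refine hu ⟨⟨⟨fun i => ⟨w i, hall i⟩, ?_⟩, ?_⟩⟩
    · intro i j hij
      have hv : w i = w j := by simpa using hij
      exact e.injective (Subtype.ext hv)
    · intro i j
      exact e.map_adj_iff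
  obtain hA | hC := hst
  · have hside : ∀ i j : Fin 4, (pathGraph 4).Adj i j → (w i ∈ s ↔ w j ∈ s) := by
      intro i j hij
      have hGa : G.Adj (w i) (w j) := e.map_adj_iff.mpr hij
      constructor
      · intro hi; by_contra hj
        exact hA _ hi _ ((hmem j).resolve_left hj) hGa
      · intro hj; by_contra hi
        exact hA _ hj _ ((hmem i).resolve_left hi) hGa.symm
    have h01 := hside 0 1 (by rw [pathGraph_adj]; decide)
    have h12 := hside 1 2 (by rw [pathGraph_adj]; decide)
    have h23 := hside 2 3 (by rw [pathGraph_adj]; decide)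
    by_cases h0 : w 0 ∈ s
    · refine hrestr s (fun i => ?_) hs
      fin_cases i
      · exact h0
      · exact h01.mp h0
      · exact h12.mp (h01.mp h0)
      · exact h23.mp (h12.mp (h01.mp h0))
    · refine hrestr t (fun i => ?_) ht
      have k0 := (hmem 0).resolve_left h0
      have k1 := (hmem 1).resolve_left (fun h => h0 (h01.mpr h))
      have k2 := (hmem 2).resolve_left (fun h => h0 (h01.mpr (h12.mpr h)))
      have k3 := (hmem 3).resolve_left (fun h => h0 (h01.mpr (h12.mpr (h23.mpr h))))
      fin_cases i
      · exact k0
      · exact k1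
      · exact k2
      · exact k3
  · have hside : ∀ i j : Fin 4, ¬ (pathGraph 4).Adj i j → (w i ∈ s ↔ w j ∈ s) := by
      intro i j hij
      constructor
      · intro hi; by_contra hj
        exact hij (e.map_adj_iff.mp (hC _ hi _ ((hmem j).resolve_left hj)))
      · intro hj; by_contra hi
        exact hij (e.map_adj_iff.mp (hC _ hj _ ((hmem i).resolve_left hi)).symm)
    have h02 := hside 0 2 (by rw [pathGraph_adj]; decide)
    have h03 := hside 0 3 (by rw [pathGraph_adj]; decide)
    have h13 := hside 1 3 (by rw [pathGraph_adj]; decide)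
    by_cases h0 : w 0 ∈ s
    · refine hrestr s (fun i => ?_) hs
      fin_cases i
      · exact h0
      · exact h13.mpr (h03.mp h0)
      · exact h02.mp h0
      · exact h03.mp h0
    · refine hrestr t (fun i => ?_) ht
      have k0 := (hmem 0).resolve_left h0
      have k2 := (hmem 2).resolve_left (fun h => h0 (h02.mpr h))
      have k3 := (hmem 3).resolve_left (fun h => h0 (h03.mpr h))
      have k1 := (hmem 1).resolve_left (fun h => h0 (h03.mpr (h13.mp h)))
      fin_cases i
      · exact k0
      · exact k1
      · exact k2
      · exact k3

lemma card_interedges_sum' {α : Type*} (r : α → α → Prop) [∀ a, DecidablePred (r a)]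
    (A B : Finset α) :
    (Rel.interedges r A B).card = ∑ a ∈ A, (B.filter (r a)).card := by
  classical
  rw [Rel.interedges_eq_biUnion, card_biUnion]
  · simp
  · intro x hx y hy hxy
    simp only [Finset.disjoint_left, mem_map, Function.Embedding.coeFn_mk]
    rintro p ⟨b, hb, rfl⟩ ⟨b', hb', hp⟩
    exact hxy (congrArg Prod.fst hp).symm

lemma card_interedges_map {α β : Type*} (f : α ↪ β) (r : β → β → Prop) (A B : Finset α) :
    (Rel.interedges (fun a b => r (f a) (f b)) A B).card
      = (Rel.interedges r (A.map f) (B.map f)).card := by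
  classical
  apply Finset.card_bij (fun p _ => (f p.1, f p.2))
  · rintro ⟨a, b⟩ hp
    rw [Rel.mem_interedges_iff] at hp ⊢
    exact ⟨mem_map_of_mem f hp.1, mem_map_of_mem f hp.2.1, hp.2.2⟩
  · rintro ⟨a, b⟩ ha ⟨a', b'⟩ hb h
    simp only [Prod.mk.injEq] at h
    exact Prod.ext (f.injective h.1) (f.injective h.2)
  · rintro ⟨x, y⟩ hxy
    rw [Rel.mem_interedges_iff] at hxy
    obtain ⟨a, ha, rfl⟩ := mem_map.mp hxy.1
    obtain ⟨b, hb, rfl⟩ := mem_map.mp hxy.2.1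
    exact ⟨(a, b), Rel.mem_interedges_iff.mpr ⟨ha, hb, hxy.2.2⟩, rfl⟩

lemma edgeDensity_comap {n m : ℕ} (G : SimpleGraph (Fin n)) (f : Fin m ↪ Fin n)
    (A B : Finset (Fin m)) :
    (G.comap f).edgeDensity A B = G.edgeDensity (A.map f) (B.map f) := by
  classical
  unfold SimpleGraph.edgeDensity Rel.edgeDensity
  rw [card_map, card_map]
  congr 1
  have : (Rel.interedges (G.comap f).Adj A B).card
      = (Rel.interedges (fun a b => G.Adj (f a) (f b)) A B).card := by
    congr 1
  rw [this, card_interedges_map]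

lemma half_filter {α : Type*} (A B : Finset α) (rr : α → α → Prop) (c : ℝ)
    (hc : 0 < c) (hB : 0 < (B.card : ℝ))
    (hsum : (∑ a ∈ A, ((B.filter (rr a)).card : ℝ)) ≤ c * A.card * B.card) :
    ∃ A'' : Finset α, A'' ⊆ A ∧ (A.card : ℝ) ≤ 2 * A''.card ∧
      ∀ a ∈ A'', ∃ D : Finset α, (D.card : ℝ) ≤ 2 * c * B.card ∧ ∀ b ∈ B, rr a b → b ∈ D := by
  classical
  set P : α → Prop := fun a => ((B.filter (rr a)).card : ℝ) ≤ 2 * c * B.card with hP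
  have hsplit : (A.filter P).card + (A.filter (fun a => ¬ P a)).card = A.card :=
    Finset.card_filter_add_card_filter_not P
  have hbad : ((A.filter (fun a => ¬ P a)).card : ℝ) * (2 * c * B.card)
      ≤ c * A.card * B.card := by
    calc ((A.filter (fun a => ¬ P a)).card : ℝ) * (2 * c * B.card)
        ≤ ∑ a ∈ A.filter (fun a => ¬ P a), ((B.filter (rr a)).card : ℝ) := by
          have := Finset.card_nsmul_le_sum (A.filter (fun a => ¬ P a))
            (fun a => ((B.filter (rr a)).card : ℝ)) (2 * c * B.card) ?_
          · simpa [nsmul_eq_mul, mul_comm] using this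
          · intro x hx
            have := (Finset.mem_filter.mp hx).2
            exact le_of_lt (lt_of_not_ge this)
      _ ≤ ∑ a ∈ A, ((B.filter (rr a)).card : ℝ) := by
          apply Finset.sum_le_sum_of_subset_of_nonneg (Finset.filter_subset _ _)
          intro i _ _; positivity
      _ ≤ c * A.card * B.card := hsum
  have hbadle : ((A.filter (fun a => ¬ P a)).card : ℝ) ≤ A.card / 2 := by
    have h2 : 0 < 2 * c * (B.card : ℝ) := by positivity
    rw [← mul_le_mul_iff_left₀ h2]
    calc ((A.filter (fun a => ¬ P a)).card : ℝ) * (2 * c * B.card)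
        ≤ c * A.card * B.card := hbad
      _ = A.card / 2 * (2 * c * B.card) := by ring
  have hAeq : (A.card : ℝ) = (A.filter P).card + (A.filter (fun a => ¬ P a)).card := by
    exact_mod_cast hsplit.symm
  refine ⟨A.filter P, Finset.filter_subset _ _, by rw [hAeq]; linarith, ?_⟩
  intro a ha
  exact ⟨B.filter (rr a), (Finset.mem_filter.mp ha).2,
    fun b hb hr => Finset.mem_filter.mpr ⟨hb, hr⟩⟩

lemma interedges_card_real {n : ℕ} (G : SimpleGraph (Fin n)) (A B : Finset (Fin n))
    (hA : A.Nonempty) (hB : B.Nonempty) :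
    ((Rel.interedges G.Adj A B).card : ℝ) = (G.edgeDensity A B : ℝ) * A.card * B.card := by
  have hA0 : (0:ℝ) < A.card := by exact_mod_cast hA.card_pos
  have hB0 : (0:ℝ) < B.card := by exact_mod_cast hB.card_pos
  have : (G.edgeDensity A B : ℝ)
      = ((Rel.interedges G.Adj A B).card : ℝ) / (A.card * B.card) := by
    unfold SimpleGraph.edgeDensity Rel.edgeDensity
    push_cast
    ring
  rw [this]
  field_simp

lemma sum_deg_le {n : ℕ} {G : SimpleGraph (Fin n)} {A B : Finset (Fin n)} {c : ℝ}
    (hA : A.Nonempty) (hB : B.Nonempty) (h : (G.edgeDensity A B : ℝ) ≤ c) :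
    (∑ a ∈ A, ((B.filter (G.Adj a)).card : ℝ)) ≤ c * A.card * B.card := by
  have hsum : (∑ a ∈ A, ((B.filter (G.Adj a)).card : ℝ))
      = ((Rel.interedges G.Adj A B).card : ℝ) := by
    rw [card_interedges_sum']
    push_cast
    rfl
  have hB0 : (0:ℝ) ≤ A.card * B.card := by positivity
  rw [hsum, interedges_card_real G A B hA hB]
  have := mul_le_mul_of_nonneg_right h hB0
  nlinarith [hA.card_pos, hB.card_pos]

lemma sum_nondeg_le {n : ℕ} {G : SimpleGraph (Fin n)} {A B : Finset (Fin n)} {c : ℝ}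
    (hA : A.Nonempty) (hB : B.Nonempty) (h : 1 - c ≤ (G.edgeDensity A B : ℝ)) :
    (∑ a ∈ A, ((B.filter (fun b => ¬ G.Adj a b)).card : ℝ)) ≤ c * A.card * B.card := by
  have hcompl := Rel.card_interedges_add_card_interedges_compl G.Adj A B
  have hsum : (∑ a ∈ A, ((B.filter (fun b => ¬ G.Adj a b)).card : ℝ))
      = ((Rel.interedges (fun x y => ¬ G.Adj x y) A B).card : ℝ) := by
    rw [card_interedges_sum']
    push_cast
    rfl
  rw [hsum]
  have h1 : ((Rel.interedges G.Adj A B).card : ℝ)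
      + ((Rel.interedges (fun x y => ¬ G.Adj x y) A B).card : ℝ)
      = (A.card : ℝ) * B.card := by exact_mod_cast hcompl
  have h2 := interedges_card_real G A B hA hB
  have hd : (1 - c) * ((A.card : ℝ) * B.card) ≤ (G.edgeDensity A B : ℝ) * ((A.card:ℝ) * B.card) := by
    apply mul_le_mul_of_nonneg_right h (by positivity)
  nlinarith [hA.card_pos, hB.card_pos]

/-- The canonical embedding of `Fin t.card` into `Fin n` with range `t`. -/
noncomputable def embOfFinset {n : ℕ} (t : Finset (Fin n)) : Fin t.card ↪ Fin n :=
  ⟨fun i => (t.equivFin.symm i : Fin n),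
    fun i j h => by
      apply t.equivFin.symm.injective
      exact Subtype.ext h⟩

lemma embOfFinset_mem {n : ℕ} (t : Finset (Fin n)) (i : Fin t.card) : embOfFinset t i ∈ t :=
  (t.equivFin.symm i).2

/-- The graph embedding from the comap. -/
noncomputable def comapEmb {n m : ℕ} (G : SimpleGraph (Fin n)) (f : Fin m ↪ Fin n) :
    (G.comap f) ↪g G :=
  { toEmbedding := f, map_rel_iff' := Iff.rfl }

lemma comap_in_class {n m : ℕ} {I : ∀ n : ℕ, SimpleGraph (Fin n) → Prop} (hI : Hereditary I)
    {G : SimpleGraph (Fin n)} (hG : I n G) (f : Fin m ↪ Fin n) : I m (G.comap f) :=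
  hI m n G (G.comap f) hG ⟨comapEmb G f⟩

lemma phi_comap_le {n m : ℕ} (G : SimpleGraph (Fin n)) (f : Fin m ↪ Fin n) :
    phi (G.comap f) ≤ phi G := by
  obtain ⟨u, hcard, hu⟩ := phi_spec (G.comap f)
  have := cograph_map (comapEmb G f) u hu
  have hle := le_phi this
  rwa [Finset.card_map, hcard] at hle

lemma extract_cograph {n : ℕ} (G : SimpleGraph (Fin n)) (t : Finset (Fin n)) (j : ℕ)
    (hj : j ≤ phi (G.comap (embOfFinset t))) :
    ∃ X : Finset (Fin n), X ⊆ t ∧ X.card = j ∧ IsCograph (G.induce (X : Set (Fin n))) := by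
  obtain ⟨u, hcard, hu⟩ := phi_spec (G.comap (embOfFinset t))
  obtain ⟨u', hu'sub, hu'card⟩ := Finset.exists_subset_card_eq (s := u) (n := j) (by omega)
  have hu' : IsCograph ((G.comap (embOfFinset t)).induce (u' : Set (Fin t.card))) :=
    cograph_subset hu'sub hu
  refine ⟨u'.map (comapEmb G (embOfFinset t)).toEmbedding, ?_, ?_, ?_⟩
  · intro x hx
    obtain ⟨i, hi, rfl⟩ := Finset.mem_map.mp hx
    exact embOfFinset_mem t i
  · simp [hu'card]
  · exact cograph_map (comapEmb G (embOfFinset t)) u' hu'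

end Aux

section Aux2

lemma fI_le_phi_comap {n : ℕ} {I : ∀ n : ℕ, SimpleGraph (Fin n) → Prop} (hI : Hereditary I)
    {G : SimpleGraph (Fin n)} (hG : I n G)
    (t : Finset (Fin n)) (x : ℝ) (ht : t.card = ⌈x⌉₊) :
    fI I x ≤ phi (G.comap (embOfFinset t)) := by
  set e : Fin t.card ≃ Fin ⌈x⌉₊ := finCongr ht with he
  set H' : SimpleGraph (Fin ⌈x⌉₊) := (G.comap (embOfFinset t)).comap ⇑(e.symm.toEmbedding)
    with hH'
  have hH'I : I ⌈x⌉₊ H' :=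
    comap_in_class hI (comap_in_class hI hG (embOfFinset t)) e.symm.toEmbedding
  have h1 : fI I x ≤ phi H' := Nat.sInf_le ⟨H', hH'I, rfl⟩
  exact le_trans h1 (phi_comap_le (G.comap (embOfFinset t)) e.symm.toEmbedding)

end Aux2


section Aux3

lemma density_half {n : ℕ} (G : SimpleGraph (Fin n)) (A B : Finset (Fin n)) (c : ℝ)
    (hc0 : 0 < c) (hA : A.Nonempty) (hB : B.Nonempty)
    (hd : (G.edgeDensity A B : ℝ) ≤ c ∨ 1 - c ≤ (G.edgeDensity A B : ℝ)) :
    ∃ (rr : Fin n → Fin n → Prop) (A'' : Finset (Fin n)),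
      A'' ⊆ A ∧ (A.card : ℝ) ≤ 2 * A''.card ∧
      (∀ a ∈ A'', ∃ D : Finset (Fin n), (D.card : ℝ) ≤ 2 * c * B.card ∧
        ∀ b ∈ B, rr a b → b ∈ D) ∧
      ((∀ a b, ¬ rr a b → ¬ G.Adj a b) ∨ (∀ a b, ¬ rr a b → G.Adj a b)) := by
  have hB0 : (0:ℝ) < B.card := by exact_mod_cast hB.card_pos
  obtain hd1 | hd2 := hd
  · obtain ⟨A'', hsub, hcard, hdeg⟩ :=
      half_filter A B G.Adj c hc0 hB0 (by convert sum_deg_le hA hB hd1 using 2)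
    exact ⟨G.Adj, A'', hsub, hcard, hdeg, Or.inl (fun a b h => h)⟩
  · obtain ⟨A'', hsub, hcard, hdeg⟩ :=
      half_filter A B (fun a b => ¬ G.Adj a b) c hc0 hB0
        (by
          convert sum_nondeg_le hA hB hd2 using 5)
    exact ⟨fun a b => ¬ G.Adj a b, A'', hsub, hcard, hdeg,
      Or.inr (fun a b h => not_not.mp h)⟩

end Aux3

section Core

open Finset

lemma core_step
    (I : ∀ n : ℕ, SimpleGraph (Fin n) → Prop) (hI : Hereditary I)
    (σ ε : ℝ) (hε0 : 0 < ε) (hε1 : ε ≤ 1)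
    (hdens : ∀ (n : ℕ) (G : SimpleGraph (Fin n)), 2 ≤ n → I n G →
      ∀ c : ℝ, 0 ≤ c → c ≤ 1 / 2 →
        ∃ A B : Finset (Fin n), Disjoint A B ∧ A.Nonempty ∧ B.Nonempty ∧
          c ^ σ * n ≤ (A.card : ℝ) ∧ ε * n ≤ (B.card : ℝ) ∧
          ((G.edgeDensity A B : ℝ) ≤ c ∨ 1 - c ≤ (G.edgeDensity A B : ℝ)))
    (n : ℕ) (c : ℝ) (hc0 : 0 < c) (hc : c ≤ 1 / 2)
    (G : SimpleGraph (Fin n)) (hG : I n G)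
    (hsmall : (phi G : ℝ) < 1 / (4 * c))
    (hx : c ^ σ ≤ c ^ (2 * σ) * n) :
    ∀ (r : ℕ) (S : Finset (Fin n)),
      (2 / ε) ^ r * (2 * (c ^ (2 * σ) * n)) ≤ c ^ σ * S.card →
      ∃ X : Finset (Fin n), X ⊆ S ∧ IsCograph (G.induce (X : Set (Fin n))) ∧
        r * fI I (c ^ (2 * σ) * n) ≤ X.card := by
  have hcσ : (0:ℝ) < c ^ σ := Real.rpow_pos_of_pos hc0 σ
  have hx0 : (0:ℝ) < c ^ (2 * σ) * n := lt_of_lt_of_le hcσ hx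
  have hεle : ε ≤ 2 := by linarith
  have h2ε : (1:ℝ) ≤ 2 / ε := by
    rw [le_div_iff₀ hε0]; linarith
  intro r
  induction r with
  | zero =>
    intro S _
    exact ⟨∅, Finset.empty_subset S, cograph_empty G, by simp⟩
  | succ r ih =>
    intro S hS
    set x : ℝ := c ^ (2 * σ) * n with hxdef
    have hpow1 : (1:ℝ) ≤ (2 / ε) ^ (r + 1) := one_le_pow₀ h2ε
    -- `S` has at least 2 elements
    have hScard2 : 2 ≤ S.card := by
      have h1 : 2 * (c ^ σ) ≤ c ^ σ * S.card := by
        calc 2 * (c ^ σ) ≤ 2 * x := by linarith [hx]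
          _ ≤ (2 / ε) ^ (r + 1) * (2 * x) := le_mul_of_one_le_left (by positivity) hpow1
          _ ≤ c ^ σ * S.card := hS
      have h2 : (2:ℝ) ≤ S.card := by
        have := (mul_le_mul_iff_right₀ hcσ).mp (by linarith [h1] : c ^ σ * 2 ≤ c ^ σ * S.card)
        exact this
      exact_mod_cast h2
    -- set up the induced subgraph on S
    set m : ℕ := S.card with hm
    set f : Fin m ↪ Fin n := embOfFinset S with hf
    set H : SimpleGraph (Fin m) := G.comap f with hH
    have hHI : I m H := comap_in_class hI hG f
    obtain ⟨A, B, hdisj, hAne, hBne, hAcard, hBcard, hdens'⟩ :=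
      hdens m H hScard2 hHI c hc0.le hc
    -- map everything to Fin n
    set A' : Finset (Fin n) := A.map f with hA'
    set B' : Finset (Fin n) := B.map f with hB'
    have hA'sub : A' ⊆ S := by
      intro a ha; obtain ⟨i, hi, rfl⟩ := Finset.mem_map.mp ha; exact embOfFinset_mem S i
    have hB'sub : B' ⊆ S := by
      intro a ha; obtain ⟨i, hi, rfl⟩ := Finset.mem_map.mp ha; exact embOfFinset_mem S i
    have hdisj' : Disjoint A' B' := Finset.disjoint_map _ |>.mpr hdisj
    have hA'card : A'.card = A.card := Finset.card_map f
    have hB'card : B'.card = B.card := Finset.card_map f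
    have hA'ne : A'.Nonempty := hAne.map
    have hB'ne : B'.Nonempty := hBne.map
    have hq : H.edgeDensity A B = G.edgeDensity A' B' := edgeDensity_comap G f A B
    have hdensG : (G.edgeDensity A' B' : ℝ) = (H.edgeDensity A B : ℝ) := by
      exact_mod_cast congrArg (fun q : ℚ => (q : ℝ)) hq.symm
    have hB'0 : (0:ℝ) < B'.card := by exact_mod_cast hB'ne.card_pos
    have hAcard' : c ^ σ * m ≤ (A'.card : ℝ) := by rw [hA'card]; exact hAcard
    have hBcard' : ε * m ≤ (B'.card : ℝ) := by rw [hB'card]; exact hBcard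
    have hd' : (G.edgeDensity A' B' : ℝ) ≤ c ∨ 1 - c ≤ (G.edgeDensity A' B' : ℝ) := by
      rw [hdensG]; exact hdens'
    obtain ⟨rr, A'', hA''sub, hhalf, hdeg, hsem⟩ := density_half G A' B' c hc0 hA'ne hB'ne hd'
    -- A'' is large enough
    have hA''big : x ≤ (A''.card : ℝ) := by
      have h2 : c ^ σ * m ≤ 2 * A''.card := le_trans hAcard' hhalf
      have h3 : (2 / ε) ^ (r + 1) * (2 * x) ≤ 2 * A''.card := le_trans hS h2
      have h4 : 2 * x ≤ 2 * (A''.card : ℝ) :=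
        le_trans (le_mul_of_one_le_left (by positivity) hpow1) h3
      linarith
    have hceil : ⌈x⌉₊ ≤ A''.card := Nat.ceil_le.mpr hA''big
    obtain ⟨t, htsub, htcard⟩ := Finset.exists_subset_card_eq hceil
    -- extract a cograph of size fI I x inside t
    have hfle : fI I x ≤ phi (G.comap (embOfFinset t)) := fI_le_phi_comap hI hG t x htcard
    obtain ⟨X₀, hX₀t, hX₀card, hX₀cog⟩ := extract_cograph G t (fI I x) hfle
    have hX₀A'' : X₀ ⊆ A'' := hX₀t.trans htsub
    have hX₀A' : X₀ ⊆ A' := hX₀A''.trans hA''sub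
    -- fI I x is at most phi G
    have hfphi : (fI I x : ℝ) ≤ (phi G : ℝ) := by
      have := le_trans hfle (phi_comap_le G (embOfFinset t))
      exact_mod_cast this
    -- choose the degree sets
    have hdeg' := fun (a : Fin n) (ha : a ∈ A'') => hdeg a ha
    choose Df hDcard hDmem using hdeg'
    -- the bad set
    set Bad : Finset (Fin n) := B'.filter (fun b => ∃ xx ∈ X₀, rr xx b) with hBadDef
    have hBadcard : (Bad.card : ℝ) ≤ (fI I x : ℝ) * (2 * c * B'.card) := by
      have hsub : Bad ⊆ X₀.attach.biUnion (fun xx => Df xx (hX₀A'' xx.2)) := by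
        intro b hb
        rw [hBadDef, Finset.mem_filter] at hb
        obtain ⟨hbB, xx, hxx, hrrb⟩ := hb
        exact Finset.mem_biUnion.mpr ⟨⟨xx, hxx⟩, Finset.mem_attach _ _,
          hDmem xx (hX₀A'' hxx) b hbB hrrb⟩
      have h1 : Bad.card ≤ ∑ xx ∈ X₀.attach, (Df xx (hX₀A'' xx.2)).card :=
        le_trans (Finset.card_le_card hsub) (Finset.card_biUnion_le)
      have h2 : (∑ xx ∈ X₀.attach, ((Df xx (hX₀A'' xx.2)).card : ℝ))
          ≤ ∑ _xx ∈ X₀.attach, (2 * c * (B'.card : ℝ)) := by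
        apply Finset.sum_le_sum
        intro xx _
        exact hDcard xx (hX₀A'' xx.2)
      rw [Finset.sum_const, nsmul_eq_mul, Finset.card_attach, hX₀card] at h2
      calc (Bad.card : ℝ) ≤ ∑ xx ∈ X₀.attach, ((Df xx (hX₀A'' xx.2)).card : ℝ) := by
            exact_mod_cast h1
        _ ≤ (fI I x : ℝ) * (2 * c * B'.card) := h2
    have hBadhalf : (Bad.card : ℝ) ≤ (B'.card : ℝ) / 2 := by
      have h4c : (0:ℝ) < 4 * c := by linarith
      have h14 : (phi G : ℝ) * (4 * c) < 1 := by
        rw [lt_div_iff₀ h4c] at hsmall; exact hsmall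
      have e1 : (fI I x : ℝ) * (2 * c * B'.card) ≤ (phi G : ℝ) * (2 * c * B'.card) :=
        mul_le_mul_of_nonneg_right hfphi (by positivity)
      nlinarith [hB'0.le]
    -- the next set
    set S' : Finset (Fin n) := B' \ Bad with hS'Def
    have hBadsub : Bad ⊆ B' := Finset.filter_subset _ _
    have hS'card : (B'.card : ℝ) / 2 ≤ (S'.card : ℝ) := by
      have hnat : S'.card = B'.card - Bad.card := Finset.card_sdiff_of_subset hBadsub
      have hcast : (S'.card : ℝ) = (B'.card : ℝ) - Bad.card := by
        rw [hnat, Nat.cast_sub (Finset.card_le_card hBadsub)]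
      rw [hcast]; linarith
    have hS'inv : (2 / ε) ^ r * (2 * x) ≤ c ^ σ * S'.card := by
      have h5 : (2 / ε) ^ (r+1) * (2 * x) * (ε / 2) ≤ c ^ σ * m * (ε / 2) :=
        mul_le_mul_of_nonneg_right hS (by positivity)
      have hpowstep : (2 / ε) ^ (r+1) * (ε / 2) = (2 / ε) ^ r := by
        rw [pow_succ]
        field_simp
      have h6 : c ^ σ * (ε * m) ≤ c ^ σ * B'.card :=
        mul_le_mul_of_nonneg_left hBcard' hcσ.le
      have h7 : c ^ σ * ((B'.card : ℝ) / 2) ≤ c ^ σ * S'.card :=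
        mul_le_mul_of_nonneg_left hS'card hcσ.le
      calc (2 / ε) ^ r * (2 * x) = (2 / ε) ^ (r+1) * (2 * x) * (ε / 2) := by
            rw [← hpowstep]; ring
        _ ≤ c ^ σ * m * (ε / 2) := h5
        _ = c ^ σ * (ε * m) / 2 := by ring
        _ ≤ c ^ σ * B'.card / 2 := by linarith
        _ = c ^ σ * ((B'.card : ℝ) / 2) := by ring
        _ ≤ c ^ σ * S'.card := h7
    obtain ⟨X₁, hX₁sub, hX₁cog, hX₁card⟩ := ih S' hS'inv
    -- assemble
    have hX₁B' : X₁ ⊆ B' := hX₁sub.trans (Finset.sdiff_subset)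
    have hdisjX : Disjoint X₀ X₁ :=
      Finset.disjoint_of_subset_left hX₀A' (Finset.disjoint_of_subset_right hX₁B' hdisj')
    have hcross : ∀ a ∈ X₀, ∀ b ∈ X₁, ¬ rr a b := by
      intro a ha b hb hrab
      have hbS' : b ∈ S' := hX₁sub hb
      rw [hS'Def, Finset.mem_sdiff] at hbS'
      exact hbS'.2 (Finset.mem_filter.mpr ⟨hbS'.1, a, ha, hrab⟩)
    refine ⟨X₀ ∪ X₁, ?_, ?_, ?_⟩
    · exact Finset.union_subset (hX₀A'.trans hA'sub)
        (hX₁sub.trans ((Finset.sdiff_subset).trans hB'sub))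
    · apply cograph_union hX₀cog hX₁cog
      obtain hsem1 | hsem2 := hsem
      · exact Or.inl (fun a ha b hb => hsem1 a b (hcross a ha b hb))
      · exact Or.inr (fun a ha b hb => hsem2 a b (hcross a ha b hb))
    · rw [Finset.card_union_of_disjoint hdisjX, hX₀card]
      calc (r + 1) * fI I x = fI I x + r * fI I x := by ring
        _ ≤ fI I x + X₁.card := by omega

end Core

/-- Step (2): for all `n ≥ 2` and `0 < c ≤ 1/2` with `log n ≥ σ log(1/c)`, either
`f(n) ≥ 1/(4c)` or `f(n) ≥ k·f(c^(2σ)·n)` where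
`k = ⌊(σ log(1/c) - 1)/log(2/ε)⌋` (logs base 2). -/
theorem f_iterated_step
    (I : ∀ n : ℕ, SimpleGraph (Fin n) → Prop) (hI : Hereditary I)
    (hall : ∀ m : ℕ, ∃ G : SimpleGraph (Fin m), I m G)
    (σ ε : ℝ) (hσ : 1 ≤ σ) (hε0 : 0 < ε) (hε1 : ε ≤ 1)
    (hdens : ∀ (n : ℕ) (G : SimpleGraph (Fin n)), 2 ≤ n → I n G →
      ∀ c : ℝ, 0 ≤ c → c ≤ 1 / 2 →
        ∃ A B : Finset (Fin n), Disjoint A B ∧ A.Nonempty ∧ B.Nonempty ∧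
          c ^ σ * n ≤ (A.card : ℝ) ∧ ε * n ≤ (B.card : ℝ) ∧
          ((G.edgeDensity A B : ℝ) ≤ c ∨ 1 - c ≤ (G.edgeDensity A B : ℝ)))
    (n : ℕ) (hn : 2 ≤ n) (c : ℝ) (hc0 : 0 < c) (hc : c ≤ 1 / 2)
    (hlog : σ * Real.logb 2 (1 / c) ≤ Real.logb 2 n) :
    1 / (4 * c) ≤ (fI I n : ℝ) ∨
      (⌊(σ * Real.logb 2 (1 / c) - 1) / Real.logb 2 (2 / ε)⌋ : ℝ) *
          (fI I (c ^ (2 * σ) * n) : ℝ) ≤ (fI I n : ℝ) := by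
  by_cases hbig : 1 / (4 * c) ≤ (fI I n : ℝ)
  · exact Or.inl hbig
  right
  set L : ℝ := Real.logb 2 (1 / c) with hL
  set K' : ℤ := ⌊(σ * L - 1) / Real.logb 2 (2 / ε)⌋ with hK'
  by_cases hKpos : K' ≤ 0
  · have h1 : (K' : ℝ) ≤ 0 := by exact_mod_cast hKpos
    have h2 : (0:ℝ) ≤ (fI I (c ^ (2 * σ) * n) : ℝ) := Nat.cast_nonneg _
    have h3 : (0:ℝ) ≤ (fI I n : ℝ) := Nat.cast_nonneg _
    nlinarith
  push_neg at hKpos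
  -- basic positivity facts
  have h1c : (0:ℝ) < 1 / c := by positivity
  have hn0 : (0:ℝ) < n := by positivity
  have hcσ : (0:ℝ) < c ^ σ := Real.rpow_pos_of_pos hc0 σ
  have hc2σ : (0:ℝ) < c ^ (2 * σ) := Real.rpow_pos_of_pos hc0 _
  have h2ε1 : (1:ℝ) < 2 / ε := by
    rw [lt_div_iff₀ hε0]; linarith
  have hlogε : 0 < Real.logb 2 (2 / ε) := Real.logb_pos (by norm_num) h2ε1
  -- (1/c)^σ ≤ n
  have hrlog : Real.logb 2 ((1 / c) ^ σ) = σ * L := by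
    rw [hL, Real.logb, Real.logb, Real.log_rpow h1c]
    ring
  have hcn : (1 / c) ^ σ ≤ (n : ℝ) := by
    have h1 : (2:ℝ) ^ (Real.logb 2 ((1 / c) ^ σ)) ≤ (2:ℝ) ^ (Real.logb 2 (n : ℝ)) := by
      apply Real.rpow_le_rpow_of_exponent_le (by norm_num)
      rw [hrlog]; exact hlog
    rwa [Real.rpow_logb (by norm_num) (by norm_num) (Real.rpow_pos_of_pos h1c σ),
      Real.rpow_logb (by norm_num) (by norm_num) hn0] at h1
  have hinv : (1 / c) ^ σ = (c ^ σ)⁻¹ := by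
    rw [one_div, Real.inv_rpow hc0.le]
  have h2σ : c ^ (2 * σ) = c ^ σ * c ^ σ := by
    rw [two_mul, Real.rpow_add hc0]
  -- hx : c^σ ≤ c^(2σ) * n
  have hx : c ^ σ ≤ c ^ (2 * σ) * n := by
    have h1 : c ^ (2 * σ) * ((1 / c) ^ σ) ≤ c ^ (2 * σ) * n :=
      mul_le_mul_of_nonneg_left hcn hc2σ.le
    have h2 : c ^ (2 * σ) * ((1 / c) ^ σ) = c ^ σ := by
      rw [hinv, h2σ]
      field_simp
    linarith
  -- the minimizer G0
  set m0 : ℕ := ⌈(n : ℝ)⌉₊ with hm0def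
  have hm0 : m0 = n := Nat.ceil_natCast n
  have hne : {m | ∃ G : SimpleGraph (Fin m0), I m0 G ∧ phi G = m}.Nonempty := by
    obtain ⟨G1, hG1⟩ := hall m0
    exact ⟨phi G1, G1, hG1, rfl⟩
  have hmem := Nat.sInf_mem hne
  obtain ⟨G0, hG0, hphiG0⟩ := hmem
  have hfIn : fI I n = phi G0 := hphiG0.symm
  have hsmall : (phi G0 : ℝ) < 1 / (4 * c) := by
    rw [← hfIn]; exact lt_of_not_ge hbig
  have hm0real : ((m0 : ℕ) : ℝ) = (n : ℝ) := by exact_mod_cast congrArg (Nat.cast (R := ℝ)) hm0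
  -- K as a natural number
  set K : ℕ := K'.toNat with hKdef
  have hKcast : (K : ℝ) = (K' : ℝ) := by
    rw [hKdef]
    exact_mod_cast congrArg (fun z : ℤ => (z : ℝ)) (Int.toNat_of_nonneg hKpos.le)
  have hKle : (K : ℝ) * Real.logb 2 (2 / ε) ≤ σ * L - 1 := by
    have h1 : (K' : ℝ) ≤ (σ * L - 1) / Real.logb 2 (2 / ε) := Int.floor_le _
    rw [hKcast]
    rw [← le_div_iff₀ hlogε]
    exact h1
  -- the top invariant
  have hinvariant : (2 / ε) ^ K * (2 * (c ^ (2 * σ) * m0)) ≤ c ^ σ * m0 := by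
    have hp1 : ((2 / ε) : ℝ) ^ K = (2:ℝ) ^ ((K : ℝ) * Real.logb 2 (2 / ε)) := by
      rw [← Real.rpow_natCast (2 / ε) K]
      rw [mul_comm, Real.rpow_mul (by norm_num : (0:ℝ) ≤ 2)]
      rw [Real.rpow_logb (by norm_num) (by norm_num) (by linarith : (0:ℝ) < 2 / ε)]
    have hp2 : ((2 / ε) : ℝ) ^ K ≤ (2:ℝ) ^ (σ * L - 1) := by
      rw [hp1]
      exact Real.rpow_le_rpow_of_exponent_le (by norm_num) hKle
    have hp3 : (2:ℝ) ^ (σ * L - 1) = (1 / c) ^ σ / 2 := by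
      rw [← hrlog, Real.rpow_sub (by norm_num), Real.rpow_logb (by norm_num) (by norm_num)
        (Real.rpow_pos_of_pos h1c σ), Real.rpow_one]
    have hp4 : ((2 / ε) : ℝ) ^ K ≤ (1 / c) ^ σ / 2 := by rw [← hp3]; exact hp2
    have hm0pos : (0:ℝ) ≤ (m0 : ℝ) := Nat.cast_nonneg _
    have hfinal : ((1 / c) ^ σ / 2) * (2 * (c ^ (2 * σ) * m0)) = c ^ σ * m0 := by
      rw [hinv, h2σ]
      field_simp
    calc (2 / ε) ^ K * (2 * (c ^ (2 * σ) * m0))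
        ≤ ((1 / c) ^ σ / 2) * (2 * (c ^ (2 * σ) * m0)) := by
          apply mul_le_mul_of_nonneg_right hp4
          positivity
      _ = c ^ σ * m0 := hfinal
  -- apply the core lemma
  have hxm0 : c ^ σ ≤ c ^ (2 * σ) * m0 := by rw [hm0real]; exact hx
  have hcore := core_step I hI σ ε hε0 hε1 hdens m0 c hc0 hc G0 hG0 hsmall hxm0 K
    Finset.univ (by simpa using hinvariant)
  obtain ⟨X, _, hXcog, hXcard⟩ := hcore
  have hphibound : K * fI I (c ^ (2 * σ) * m0) ≤ phi G0 := le_trans hXcard (le_phi hXcog)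
  have hfIeq : fI I (c ^ (2 * σ) * (m0 : ℝ)) = fI I (c ^ (2 * σ) * (n : ℝ)) := by
    rw [hm0real]
  rw [hfIeq] at hphibound
  have : (K : ℝ) * (fI I (c ^ (2 * σ) * n) : ℝ) ≤ (phi G0 : ℝ) := by
    exact_mod_cast hphibound
  rw [← hKcast, hfIn]
  exact this
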